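/- Let E be an idempotent algebra in a symmetric monoidal stable (or additive with duals) category C whose underlying object is dualizable. Then E is canonically self-dual: the natural E-module structure on the dual E^∨ yields an equivalence E^∨ ≃ E^∨ ⊗ E, and dualizing gives E ≃ E^∨. -/

import Mathlib

open CategoryTheory MonoidalCategory

namespace IdemSelfDual

variable {C : Type*} [Category C] [MonoidalCategory C]
variable {E : C} [HasRightDual E] (ι : 𝟙_ C ⟶ E) (μ : E ⊗ E ⟶ E)

/-- the map `x ↦ Σ (x eᵢ) ⊗ eⁱ`. -/
noncomputable def w0 : E ⟶ E ⊗ (Eᘁ) :=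
  (ρ_ E).inv ≫ (E ◁ η_ E (Eᘁ)) ≫ (α_ E E (Eᘁ)).inv ≫ (μ ▷ (Eᘁ))

/-- the action `ξ ⊗ y ↦ Σ ξ(y eᵢ) eⁱ` of `E` on its dual. -/
noncomputable def aAct : (Eᘁ : C) ⊗ E ⟶ (Eᘁ : C) :=
  ((Eᘁ : C) ◁ w0 μ) ≫ (α_ (Eᘁ) E (Eᘁ)).inv ≫ (ε_ E (Eᘁ) ▷ (Eᘁ)) ≫ (λ_ (Eᘁ)).hom

/-- the unit insertion `ξ ↦ ξ ⊗ 1`. -/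
noncomputable def uMap : (Eᘁ : C) ⟶ (Eᘁ : C) ⊗ E := (ρ_ (Eᘁ)).inv ≫ ((Eᘁ : C) ◁ ι)

/-- the counit `ξ ↦ ξ(1)`. -/
noncomputable def cMap : (Eᘁ : C) ⟶ 𝟙_ C := uMap ι ≫ ε_ E (Eᘁ)

theorem w0_unit (hone : ι ▷ E ≫ μ = (λ_ E).hom) : ι ≫ w0 μ = η_ E (Eᘁ) := by
  rw [w0, rightUnitor_inv_naturality_assoc, ← whisker_exchange_assoc,
    associator_inv_naturality_left_assoc, ← comp_whiskerRight, hone, ← leftUnitor_tensor_hom]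
  rw [leftUnitor_naturality, unitors_equal, Iso.inv_hom_id_assoc]

theorem unit_aAct (hone : ι ▷ E ≫ μ = (λ_ E).hom) :
    ((Eᘁ : C) ◁ ι) ≫ aAct μ = (ρ_ (Eᘁ)).hom := by
  rw [aAct, ← MonoidalCategory.whiskerLeft_comp_assoc, w0_unit ι μ hone,
    ExactPairing.coevaluation_evaluation_assoc, Iso.inv_hom_id, Category.comp_id]

theorem inv_mu_left [IsIso μ] (hone : ι ▷ E ≫ μ = (λ_ E).hom) :
    inv μ = (λ_ E).inv ≫ (ι ▷ E) := by
  apply IsIso.inv_eq_of_inv_hom_id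
  rw [Category.assoc, hone, Iso.inv_hom_id]

theorem inv_mu_right [IsIso μ] (hmul : E ◁ ι ≫ μ = (ρ_ E).hom) :
    inv μ = (ρ_ E).inv ≫ (E ◁ ι) := by
  apply IsIso.inv_eq_of_inv_hom_id
  rw [Category.assoc, hmul, Iso.inv_hom_id]

theorem idem_exp [IsIso μ] (hone : ι ▷ E ≫ μ = (λ_ E).hom) :
    𝟙 (E ⊗ E) = μ ≫ (λ_ E).inv ≫ (ι ▷ E) := by
  rw [← inv_mu_left ι μ hone, IsIso.hom_inv_id]

/-- `(a ▷ E) = α ≫ (Eᘁ ◁ μ)` : the action is "multiplicative" thanks to idempotency. -/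
theorem star [IsIso μ] (hone : ι ▷ E ≫ μ = (λ_ E).hom) :
    (α_ (Eᘁ) E E).inv ≫ (aAct μ ▷ E) = (Eᘁ : C) ◁ μ := by
  calc (α_ (Eᘁ) E E).inv ≫ (aAct μ ▷ E)
      = ((Eᘁ : C) ◁ (μ ≫ (λ_ E).inv ≫ (ι ▷ E))) ≫ (α_ (Eᘁ) E E).inv ≫ (aAct μ ▷ E) := by
        rw [← idem_exp ι μ hone]; simp
    _ = ((Eᘁ : C) ◁ μ) ≫ ((Eᘁ : C) ◁ (λ_ E).inv) ≫ (α_ (Eᘁ) (𝟙_ C) E).inv ≫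
          ((((Eᘁ : C) ◁ ι) ≫ aAct μ) ▷ E) := by
        simp only [MonoidalCategory.whiskerLeft_comp, Category.assoc,
          associator_inv_naturality_middle_assoc, comp_whiskerRight]
    _ = (Eᘁ : C) ◁ μ := by
        rw [unit_aAct ι μ hone]; simp

theorem u_a (hone : ι ▷ E ≫ μ = (λ_ E).hom) : uMap ι ≫ aAct μ = 𝟙 (Eᘁ : C) := by
  rw [uMap, Category.assoc, unit_aAct ι μ hone, Iso.inv_hom_id]

theorem a_u [IsIso μ] (hone : ι ▷ E ≫ μ = (λ_ E).hom) (hmul : E ◁ ι ≫ μ = (ρ_ E).hom) :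
    aAct μ ≫ uMap ι = 𝟙 ((Eᘁ : C) ⊗ E) := by
  rw [uMap, rightUnitor_inv_naturality_assoc, ← whisker_exchange,
    rightUnitor_tensor_inv, Category.assoc, ← associator_inv_naturality_right_assoc,
    star ι μ hone, ← MonoidalCategory.whiskerLeft_comp_assoc,
    ← MonoidalCategory.whiskerLeft_comp, Category.assoc, hmul]
  simp

theorem isIso_uMap [IsIso μ] (hone : ι ▷ E ≫ μ = (λ_ E).hom)
    (hmul : E ◁ ι ≫ μ = (ρ_ E).hom) : IsIso (uMap ι (E := E)) :=
  ⟨aAct μ, u_a ι μ hone, a_u ι μ hone hmul⟩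

/-- `ev ≫ η = (c ▷ E) ≫ λ`. -/
theorem ev_unit [IsIso μ] (hone : ι ▷ E ≫ μ = (λ_ E).hom) (hmul : E ◁ ι ≫ μ = (ρ_ E).hom) :
    ε_ E (Eᘁ) ≫ ι = (cMap ι ▷ E) ≫ (λ_ E).hom := by
  haveI := isIso_uMap ι μ hone hmul
  rw [← cancel_epi (uMap ι (E := E))]
  rw [← Category.assoc, ← cMap]
  rw [uMap, Category.assoc, whisker_exchange_assoc, ← rightUnitor_inv_naturality_assoc,
    leftUnitor_naturality, unitors_equal, Iso.inv_hom_id_assoc]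

theorem whisker_unit_ev : ((Eᘁ : C) ◁ ι) ≫ ε_ E (Eᘁ) = (ρ_ (Eᘁ)).hom ≫ cMap ι := by
  rw [cMap, uMap]; simp

/-- `(Eᘁ ◁ μ) ≫ ev ≫ η = α⁻¹ ≫ (ev ▷ E) ≫ λ`. -/
theorem mu_ev_unit [IsIso μ] (hone : ι ▷ E ≫ μ = (λ_ E).hom) (hmul : E ◁ ι ≫ μ = (ρ_ E).hom) :
    ((Eᘁ : C) ◁ μ) ≫ ε_ E (Eᘁ) ≫ ι
      = (α_ (Eᘁ) E E).inv ≫ (ε_ E (Eᘁ) ▷ E) ≫ (λ_ E).hom := by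
  symm
  calc (α_ (Eᘁ) E E).inv ≫ (ε_ E (Eᘁ) ▷ E) ≫ (λ_ E).hom
      = ((Eᘁ : C) ◁ (μ ≫ (λ_ E).inv ≫ (ι ▷ E))) ≫ (α_ (Eᘁ) E E).inv ≫
          (ε_ E (Eᘁ) ▷ E) ≫ (λ_ E).hom := by
        rw [← idem_exp ι μ hone]; simp
    _ = ((Eᘁ : C) ◁ μ) ≫ ((Eᘁ : C) ◁ (λ_ E).inv) ≫ (α_ (Eᘁ) (𝟙_ C) E).inv ≫
          ((((Eᘁ : C) ◁ ι) ≫ ε_ E (Eᘁ)) ▷ E) ≫ (λ_ E).hom := by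
        simp only [MonoidalCategory.whiskerLeft_comp, Category.assoc,
          associator_inv_naturality_middle_assoc, comp_whiskerRight]
    _ = ((Eᘁ : C) ◁ μ) ≫ (cMap ι ▷ E) ≫ (λ_ E).hom := by
        rw [whisker_unit_ev, comp_whiskerRight]
        simp
    _ = ((Eᘁ : C) ◁ μ) ≫ ε_ E (Eᘁ) ≫ ι := by rw [← ev_unit ι μ hone hmul]

/-- `ev ≫ coev = a ≫ λ⁻¹ ≫ (η ▷ Eᘁ)`. -/
theorem ev_coev [IsIso μ] (hone : ι ▷ E ≫ μ = (λ_ E).hom) (hmul : E ◁ ι ≫ μ = (ρ_ E).hom) :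
    ε_ E (Eᘁ) ≫ η_ E (Eᘁ)
      = aAct μ ≫ (λ_ (Eᘁ)).inv ≫ (ι ▷ (Eᘁ : C)) := by
  symm
  calc aAct μ ≫ (λ_ (Eᘁ)).inv ≫ (ι ▷ (Eᘁ : C))
      = ((Eᘁ : C) ◁ w0 μ) ≫ (α_ (Eᘁ) E (Eᘁ)).inv ≫ ((ε_ E (Eᘁ) ≫ ι) ▷ (Eᘁ)) := by
        rw [aAct]
        simp only [Category.assoc, Iso.hom_inv_id_assoc, comp_whiskerRight]
    _ = ((Eᘁ : C) ◁ (ρ_ E).inv) ≫ ((Eᘁ : C) ◁ (E ◁ η_ E (Eᘁ))) ≫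
          ((Eᘁ : C) ◁ (α_ E E (Eᘁ)).inv) ≫ (α_ (Eᘁ) (E ⊗ E) (Eᘁ)).inv ≫
          (((α_ (Eᘁ) E E).inv ≫ (ε_ E (Eᘁ) ▷ E) ≫ (λ_ E).hom) ▷ (Eᘁ)) := by
        rw [w0]
        simp only [MonoidalCategory.whiskerLeft_comp, Category.assoc,
          associator_inv_naturality_middle_assoc]
        rw [← comp_whiskerRight, mu_ev_unit ι μ hone hmul]
    _ = ((Eᘁ : C) ◁ (ρ_ E).inv) ≫ ((Eᘁ : C) ◁ (E ◁ η_ E (Eᘁ))) ≫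
          (α_ (Eᘁ) E (E ⊗ (Eᘁ))).inv ≫ (α_ ((Eᘁ : C) ⊗ E) E (Eᘁ)).inv ≫
          ((ε_ E (Eᘁ) ▷ E) ▷ (Eᘁ)) ≫ ((λ_ E).hom ▷ (Eᘁ)) := by
        simp only [comp_whiskerRight, Category.assoc, pentagon_inv_assoc]
    _ = ε_ E (Eᘁ) ≫ η_ E (Eᘁ) := by
        rw [← associator_inv_naturality_left_assoc, ← leftUnitor_tensor_hom,
          associator_inv_naturality_right_assoc, ← rightUnitor_tensor_inv_assoc,
          whisker_exchange_assoc, ← rightUnitor_inv_naturality_assoc,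
          leftUnitor_naturality, unitors_equal, Iso.inv_hom_id_assoc]

section Braided
variable [BraidedCategory C]

/-- the trace element `χ = Σ eᵢ ⬝ eⁱ`. -/
noncomputable def chi : 𝟙_ C ⟶ (Eᘁ : C) :=
  η_ E (Eᘁ) ≫ (β_ E (Eᘁ)).hom ≫ aAct μ

noncomputable def psi : (Eᘁ : C) ⟶ E := cMap ι ≫ ι

noncomputable def phi : E ⟶ (Eᘁ : C) := (λ_ E).inv ≫ (chi μ ▷ E) ≫ aAct μ

theorem c_chi [IsIso μ] (hone : ι ▷ E ≫ μ = (λ_ E).hom) (hmul : E ◁ ι ≫ μ = (ρ_ E).hom) :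
    cMap ι ≫ chi μ = 𝟙 (Eᘁ : C) := by
  rw [chi, cMap, uMap, Category.assoc, Category.assoc,
    reassoc_of% (ev_coev ι μ hone hmul), reassoc_of% (unit_aAct ι μ hone),
    Iso.inv_hom_id_assoc, BraidedCategory.braiding_naturality_left_assoc,
    unit_aAct ι μ hone, braiding_rightUnitor, Iso.inv_hom_id]

theorem coev_c : η_ E (Eᘁ) ≫ (E ◁ cMap ι) ≫ (ρ_ E).hom = ι := by
  rw [cMap, uMap]
  simp only [MonoidalCategory.whiskerLeft_comp, Category.assoc,
    whiskerLeft_rightUnitor_inv]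
  rw [← associator_naturality_right_assoc, rightUnitor_inv_naturality_assoc,
    ← whisker_exchange_assoc, ExactPairing.evaluation_coevaluation_assoc,
    leftUnitor_naturality_assoc, unitors_equal, Iso.inv_hom_id_assoc]
  simp

theorem coev_braid_c :
    η_ E (Eᘁ) ≫ (β_ E (Eᘁ)).hom ≫ (cMap ι ▷ E) ≫ (λ_ E).hom = ι := by
  rw [← BraidedCategory.braiding_naturality_right_assoc, braiding_leftUnitor]
  exact coev_c ι

theorem psi_phi [IsIso μ] (hone : ι ▷ E ≫ μ = (λ_ E).hom) (hmul : E ◁ ι ≫ μ = (ρ_ E).hom) :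
    psi ι ≫ phi μ = 𝟙 (Eᘁ : C) := by
  rw [psi, phi, Category.assoc, leftUnitor_inv_naturality_assoc, whisker_exchange_assoc,
    unit_aAct ι μ hone, rightUnitor_naturality, ← unitors_equal,
    Iso.inv_hom_id_assoc, c_chi ι μ hone hmul]

theorem phi_psi [IsIso μ] (hone : ι ▷ E ≫ μ = (λ_ E).hom) (hmul : E ◁ ι ≫ μ = (ρ_ E).hom) :
    phi μ ≫ psi ι = 𝟙 E := by
  have hac : aAct μ ≫ cMap ι = ε_ E (Eᘁ) := by
    rw [cMap, ← Category.assoc, a_u ι μ hone hmul, Category.id_comp]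
  have hstar : aAct μ ▷ E = (α_ (Eᘁ) E E).hom ≫ ((Eᘁ : C) ◁ μ) := by
    rw [← star ι μ hone, Iso.hom_inv_id_assoc]
  rw [phi, psi]
  simp only [Category.assoc]
  rw [reassoc_of% hac, chi, comp_whiskerRight, comp_whiskerRight, hstar]
  simp only [Category.assoc]
  rw [ev_unit ι μ hone hmul, whisker_exchange_assoc, leftUnitor_naturality,
    ← associator_naturality_left_assoc, leftUnitor_tensor_hom]
  simp only [Category.assoc, Iso.hom_inv_id_assoc]
  have h4 : (η_ E (Eᘁ) ▷ E) ≫ ((β_ E (Eᘁ)).hom ▷ E) ≫ ((cMap ι ▷ E) ▷ E) ≫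
      ((λ_ E).hom ▷ E) ≫ μ = (ι ▷ E) ≫ μ := by
    have h5 := congrArg (fun f => f ▷ E ≫ μ) (coev_braid_c ι)
    simpa [comp_whiskerRight] using h5
  rw [h4, hone, Iso.inv_hom_id]

end Braided

end IdemSelfDual

open CategoryTheory MonoidalCategory

/-- Let `E` be an idempotent algebra (a monoid object whose multiplication is an
isomorphism) in a symmetric monoidal category, whose underlying object is dualizable
(has a right dual `Eᘁ`).  Then the `E`-module structure on the dual gives an isomorphism
`Eᘁ ≅ Eᘁ ⊗ E`, and `E` is self-dual: `E ≅ Eᘁ`. -/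
theorem idempotent_algebra_self_dual {C : Type*} [Category C] [MonoidalCategory C]
    [SymmetricCategory C] (M : Mon C) (hidem : IsIso (MonObj.mul : M.X ⊗ M.X ⟶ M.X)) [HasRightDual M.X] :
    Nonempty ((M.X)ᘁ ≅ (M.X)ᘁ ⊗ M.X) ∧ Nonempty (M.X ≅ (M.X)ᘁ) := by
  have : IsIso (MonObj.mul : M.X ⊗ M.X ⟶ M.X) := hidem
  constructor
  · exact ⟨⟨IdemSelfDual.uMap (MonObj.one : 𝟙_ C ⟶ M.X), IdemSelfDual.aAct (MonObj.mul : M.X ⊗ M.X ⟶ M.X),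
      IdemSelfDual.u_a MonObj.one MonObj.mul (MonObj.one_mul M.X),
      IdemSelfDual.a_u MonObj.one MonObj.mul (MonObj.one_mul M.X) (MonObj.mul_one M.X)⟩⟩
  · exact ⟨⟨IdemSelfDual.phi (MonObj.mul : M.X ⊗ M.X ⟶ M.X), IdemSelfDual.psi (MonObj.one : 𝟙_ C ⟶ M.X),
      IdemSelfDual.phi_psi MonObj.one MonObj.mul (MonObj.one_mul M.X) (MonObj.mul_one M.X),
      IdemSelfDual.psi_phi MonObj.one MonObj.mul (MonObj.one_mul M.X) (MonObj.mul_one M.X)⟩⟩
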